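/- For the map (q,s,r) ↦ (x,y,z) given by x = q - c₀t - (1/k)e^{k(r-m(s))} sin(k(q-ct)), y = s, z = Z₀ + r + (1/k)e^{k(r-m(s))} cos(k(q-ct)), with m differentiable, the determinant of the Jacobian matrix ∂(x,y,z)/∂(q,s,r) equals 1 - e^{2k(r-m(s))}, independent of t and q. -/

import Mathlib

open Real

/-- the Jacobian determinant of the Lagrangian flow map equals
1 - e^{2k(r - m(s))}, independent of t and q. -/
theorem jacobian_det_lagrangian_map
    (k c c₀ Z₀ t : ℝ) (hk : 0 < k) (m : ℝ → ℝ) (hm : Differentiable ℝ m)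
    (x y z : ℝ → ℝ → ℝ → ℝ)
    (hx : ∀ q s r, x q s r =
      q - c₀ * t - (1 / k) * exp (k * (r - m s)) * sin (k * (q - c * t)))
    (hy : ∀ q s r, y q s r = s)
    (hz : ∀ q s r, z q s r =
      Z₀ + r + (1 / k) * exp (k * (r - m s)) * cos (k * (q - c * t))) :
    ∀ q s r,
      Matrix.det
        !![deriv (fun q' => x q' s r) q, deriv (fun q' => y q' s r) q,
             deriv (fun q' => z q' s r) q;
           deriv (fun s' => x q s' r) s, deriv (fun s' => y q s' r) s,
             deriv (fun s' => z q s' r) s;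
           deriv (fun r' => x q s r') r, deriv (fun r' => y q s r') r,
             deriv (fun r' => z q s r') r] =
      1 - exp (2 * k * (r - m s)) := by
  intro q s r
  have hk0 : k ≠ 0 := ne_of_gt hk
  set E : ℝ := exp (k * (r - m s)) with hE
  set C : ℝ := cos (k * (q - c * t)) with hC
  set S : ℝ := sin (k * (q - c * t)) with hS
  have M := (hm s).hasDerivAt
  -- q derivatives
  have hθq : HasDerivAt (fun q' : ℝ => k * (q' - c * t)) k q := by
    simpa using ((hasDerivAt_id q).sub_const (c * t)).const_mul k
  have hxq : deriv (fun q' => x q' s r) q = 1 - E * C := by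
    have h : HasDerivAt (fun q' => x q' s r) (1 - E * C) q := by
      have := ((hasDerivAt_id q).sub_const (c₀ * t)).sub
        ((hθq.sin).const_mul ((1 / k) * E))
      simp only [hx]
      convert this using 1
      all_goals first
        | (funext u; simp only [Pi.sub_apply, Pi.add_apply, id]; rfl)
        | (funext u; field_simp; try ring)
        | (field_simp; try ring)
        | rfl
    exact h.deriv
  have hyq : deriv (fun q' => y q' s r) q = 0 := by
    simp [hy]
  have hzq : deriv (fun q' => z q' s r) q = -(E * S) := by
    have h : HasDerivAt (fun q' => z q' s r) (-(E * S)) q := by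
      have := (HasDerivAt.const_add (Z₀ + r) ((hθq.cos).const_mul ((1 / k) * E)))
      simp only [hz]
      convert this using 1
      all_goals first
        | (funext u; field_simp; try ring)
        | (field_simp; try ring)
        | rfl
    exact h.deriv
  -- s derivatives
  have hθs : HasDerivAt (fun s' : ℝ => k * (r - m s')) (k * (0 - deriv m s)) s := by
    exact ((hasDerivAt_const s r).sub M).const_mul k
  have hEs : HasDerivAt (fun s' : ℝ => exp (k * (r - m s'))) (E * (k * (0 - deriv m s))) s :=
    hθs.exp
  have hxs : deriv (fun s' => x q s' r) s = deriv m s * E * S := by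
    have h : HasDerivAt (fun s' => x q s' r) (deriv m s * E * S) s := by
      have := (HasDerivAt.const_sub (q - c₀ * t)
        (((hEs.const_mul (1 / k)).mul_const S)))
      simp only [hx]
      convert this using 1
      all_goals first
        | (funext u; field_simp; try ring)
        | (field_simp; try ring)
        | rfl
    exact h.deriv
  have hys : deriv (fun s' => y q s' r) s = 1 := by
    simp [hy]
  have hzs : deriv (fun s' => z q s' r) s = -(deriv m s * E * C) := by
    have h : HasDerivAt (fun s' => z q s' r) (-(deriv m s * E * C)) s := by
      have := (HasDerivAt.const_add (Z₀ + r)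
        (((hEs.const_mul (1 / k)).mul_const C)))
      simp only [hz]
      convert this using 1
      all_goals first
        | (funext u; field_simp; try ring)
        | (field_simp; try ring)
        | rfl
    exact h.deriv
  -- r derivatives
  have hθr : HasDerivAt (fun r' : ℝ => k * (r' - m s)) k r := by
    simpa using ((hasDerivAt_id r).sub_const (m s)).const_mul k
  have hEr : HasDerivAt (fun r' : ℝ => exp (k * (r' - m s))) (E * k) r := hθr.exp
  have hxr : deriv (fun r' => x q s r') r = -(E * S) := by
    have h : HasDerivAt (fun r' => x q s r') (-(E * S)) r := by
      have := (HasDerivAt.const_sub (q - c₀ * t)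
        (((hEr.const_mul (1 / k)).mul_const S)))
      simp only [hx]
      convert this using 1
      all_goals first
        | (funext u; field_simp; try ring)
        | (field_simp; try ring)
        | rfl
    exact h.deriv
  have hyr : deriv (fun r' => y q s r') r = 0 := by
    simp [hy]
  have hzr : deriv (fun r' => z q s r') r = 1 + E * C := by
    have h : HasDerivAt (fun r' => z q s r') (1 + E * C) r := by
      have := (hasDerivAt_id r).const_add (Z₀) |>.add
        (((hEr.const_mul (1 / k)).mul_const C))
      simp only [hz]
      convert this using 1
      all_goals first
        | (funext u; simp only [Pi.sub_apply, Pi.add_apply, id]; rfl)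
        | (funext u; field_simp; try ring)
        | (field_simp; try ring)
        | rfl
    exact h.deriv
  rw [hxq, hyq, hzq, hxs, hys, hzs, hxr, hyr, hzr, Matrix.det_fin_three]
  have hsc : S ^ 2 + C ^ 2 = 1 := sin_sq_add_cos_sq _
  have hE2 : exp (2 * k * (r - m s)) = E * E := by
    rw [hE, ← exp_add]; ring_nf
  rw [hE2]
  simp [Matrix.cons_val_zero, Matrix.cons_val_one]
  nlinarith [hsc]
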